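/- Let G be a Hermitian operator on a finite-dimensional nonzero complex inner product space, with smallest eigenvalue μ_min and largest eigenvalue μ_max. Then for every unit vector ψ, the variance Var[G]_ψ := ⟨ψ, G² ψ⟩ − ⟨ψ, G ψ⟩² satisfies Var[G]_ψ ≤ (μ_max − μ_min)² / 4. -/

import Mathlib

open scoped InnerProductSpace

theorem stmt_7 {E : Type*} [NormedAddCommGroup E] [InnerProductSpace ℂ E]
    [FiniteDimensional ℂ E] [Nontrivial E]
    (G : E →L[ℂ] E) (hG : ∀ φ φ' : E, ⟪φ, G φ'⟫_ℂ = ⟪G φ, φ'⟫_ℂ)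
    (μmin μmax : ℝ)
    (hmin : IsLeast {μ : ℝ | (μ : ℂ) ∈ spectrum ℂ G} μmin)
    (hmax : IsGreatest {μ : ℝ | (μ : ℂ) ∈ spectrum ℂ G} μmax) :
    ∀ ψ : E, ‖ψ‖ = 1 →
      (⟪ψ, G (G ψ)⟫_ℂ - ⟪ψ, G ψ⟫_ℂ ^ 2).re ≤ (μmax - μmin) ^ 2 / 4 := by
  intro ψ hψ
  have hGsa : IsSelfAdjoint G := by
    rw [ContinuousLinearMap.isSelfAdjoint_iff_isSymmetric]
    intro x y
    exact (hG x y).symm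
  set c : ℝ := (μmin + μmax) / 2 with hc
  set Δ : ℝ := (μmax - μmin) / 2 with hΔdef
  have hΔnonneg : 0 ≤ Δ := by
    have := hmax.2 hmin.1
    simp only [hΔdef]; linarith
  set A : E →L[ℂ] E := G - algebraMap ℂ (E →L[ℂ] E) (c : ℂ) with hA
  have hAsa : IsSelfAdjoint A := by
    rw [IsSelfAdjoint, hA, star_sub, hGsa.star_eq, ← algebraMap_star_comm,
      Complex.star_def, Complex.conj_ofReal]
  -- spectrum bound
  have hspec : ∀ z ∈ spectrum ℂ A, ‖z‖₊ ≤ (NNReal.mk Δ hΔnonneg) := by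
    intro z hz
    rw [hA, ← spectrum.sub_singleton_eq] at hz
    obtain ⟨w, hw, u, hu, hwu⟩ := hz
    simp only [Set.mem_singleton_iff] at hu
    subst hu
    have hwre : w = (w.re : ℂ) := hGsa.mem_spectrum_eq_re hw
    have hwmem : (w.re : ℝ) ∈ {μ : ℝ | (μ : ℂ) ∈ spectrum ℂ G} := by
      rw [Set.mem_setOf_eq, ← hwre]; exact hw
    have h1 : μmin ≤ w.re := hmin.2 hwmem
    have h2 : w.re ≤ μmax := hmax.2 hwmem
    have hz' : z = ((w.re - c : ℝ) : ℂ) := by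
      rw [← hwu, Complex.ofReal_sub, ← hwre]
    rw [← NNReal.coe_le_coe, coe_nnnorm, NNReal.coe_mk, hz', Complex.norm_real,
      Real.norm_eq_abs, abs_le]
    constructor <;> simp only [hc, hΔdef] <;> linarith
  have hnormA : ‖A‖ ≤ Δ := by
    have h1 : spectralRadius ℂ A ≤ ENNReal.ofNNReal (NNReal.mk Δ hΔnonneg) := by
      rw [spectralRadius]
      exact iSup₂_le fun z hz => by exact_mod_cast hspec z hz
    rw [hAsa.spectralRadius_eq_nnnorm] at h1
    have := ENNReal.coe_le_coe.mp h1
    exact_mod_cast this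
  -- inner product computations
  set r : ℝ := (⟪ψ, G ψ⟫_ℂ).re with hr
  have hreal : ⟪ψ, G ψ⟫_ℂ = (r : ℂ) := by
    have h2 : (starRingEnd ℂ) ⟪ψ, G ψ⟫_ℂ = ⟪ψ, G ψ⟫_ℂ := by
      rw [inner_conj_symm]; exact (hG ψ ψ).symm
    exact (Complex.conj_eq_iff_re.mp h2).symm
  have hGG : ⟪ψ, G (G ψ)⟫_ℂ = ((‖G ψ‖ ^ 2 : ℝ) : ℂ) := by
    rw [hG ψ (G ψ), @inner_self_eq_norm_sq_to_K ℂ]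
    norm_cast
  have hAψ : ‖A ψ‖ ^ 2 = ‖G ψ‖ ^ 2 - 2 * c * r + c ^ 2 := by
    have : A ψ = G ψ - (c : ℂ) • ψ := by
      simp [hA, Algebra.algebraMap_eq_smul_one]
    rw [this, @norm_sub_sq ℂ]
    have h1 : ‖(c : ℂ) • ψ‖ = |c| := by
      rw [norm_smul, hψ, Complex.norm_real, Real.norm_eq_abs, mul_one]
    have h2 : (RCLike.re ⟪G ψ, (c : ℂ) • ψ⟫_ℂ : ℝ) = c * r := by
      rw [inner_smul_right]
      have : ⟪G ψ, ψ⟫_ℂ = (r : ℂ) := by rw [← hG ψ ψ, hreal]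
      rw [this]
      simp
    rw [h1, h2, sq_abs]
    ring
  have hAψle : ‖A ψ‖ ^ 2 ≤ Δ ^ 2 := by
    have h1 : ‖A ψ‖ ≤ Δ := by
      calc ‖A ψ‖ ≤ ‖A‖ * ‖ψ‖ := A.le_opNorm ψ
        _ = ‖A‖ := by rw [hψ, mul_one]
        _ ≤ Δ := hnormA
    exact pow_le_pow_left₀ (norm_nonneg _) h1 2
  have hLHS : (⟪ψ, G (G ψ)⟫_ℂ - ⟪ψ, G ψ⟫_ℂ ^ 2).re = ‖G ψ‖ ^ 2 - r ^ 2 := by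
    rw [hGG, hreal, ← Complex.ofReal_pow, Complex.sub_re, Complex.ofReal_re,
      Complex.ofReal_re]
  rw [hLHS]
  have key : ‖G ψ‖ ^ 2 - r ^ 2 = ‖A ψ‖ ^ 2 - (r - c) ^ 2 := by
    rw [hAψ]; ring
  have : (μmax - μmin) ^ 2 / 4 = Δ ^ 2 := by rw [hΔdef]; ring
  rw [key, this]
  nlinarith [sq_nonneg (r - c)]
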